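/- arXiv:1407.5373 — 2 statements merged into one kernel-verified Lean document; each statement's English description precedes it below -/
import Mathlib

section
/- The harmonic-number bound between social welfare and fixed-price revenue is tight: if Pr[v ≥ t] = 1/t for all integers 1 ≤ t ≤ v*, then E[v] = H_{v*} and max_{1 ≤ t ≤ v*} t · Pr[v ≥ t] = 1, so the ratio of social welfare to optimal fixed-price revenue is exactly H_{v*}. -/
/-- Tightness of the harmonic-number bound: if `Pr[v ≥ t] = 1/t` for
all integers `1 ≤ t ≤ V` (equal-revenue distribution truncated at `V`), then
`E[v] = H_V`, the optimal fixed-price revenue `max_{1 ≤ t ≤ V} t·Pr[v ≥ t]` is `1`,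
and the ratio of social welfare to optimal fixed-price revenue is exactly `H_V`. -/
theorem stmt3 (V : ℕ) (hV : 1 ≤ V) (f : ℕ → ℝ) (hf0 : ∀ t, 0 ≤ f t)
    (htail : ∀ t ∈ Finset.Icc 1 V, (∑ u ∈ Finset.Icc t V, f u) = 1 / (t:ℝ)) :
    (∑ t ∈ Finset.Icc 1 V, (t:ℝ) * f t) = (∑ i ∈ Finset.Icc 1 V, (1:ℝ)/i) ∧
    (Finset.Icc 1 V).sup' (Finset.nonempty_Icc.mpr hV)
        (fun t => (t:ℝ) * ∑ u ∈ Finset.Icc t V, f u) = 1 ∧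
    (∑ t ∈ Finset.Icc 1 V, (t:ℝ) * f t) /
      (Finset.Icc 1 V).sup' (Finset.nonempty_Icc.mpr hV)
        (fun t => (t:ℝ) * ∑ u ∈ Finset.Icc t V, f u)
      = (∑ i ∈ Finset.Icc 1 V, (1:ℝ)/i) := by
  have hsum : (∑ t ∈ Finset.Icc 1 V, (t:ℝ) * f t)
      = (∑ i ∈ Finset.Icc 1 V, (1:ℝ)/i) := by
    have h1 : (∑ t ∈ Finset.Icc 1 V, (t:ℝ) * f t)
        = ∑ t ∈ Finset.Icc 1 V, ∑ i ∈ Finset.Icc 1 t, f t := by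
      refine Finset.sum_congr rfl fun t ht => ?_
      rw [Finset.sum_const, Nat.card_Icc]
      simp [nsmul_eq_mul]
    have h2 : (∑ t ∈ Finset.Icc 1 V, ∑ i ∈ Finset.Icc 1 t, f t)
        = ∑ i ∈ Finset.Icc 1 V, ∑ t ∈ Finset.Icc i V, f t := by
      refine Finset.sum_comm' fun t i => ?_
      simp only [Finset.mem_Icc]
      omega
    rw [h1, h2]
    exact Finset.sum_congr rfl fun i hi => htail i hi
  have hsup : (Finset.Icc 1 V).sup' (Finset.nonempty_Icc.mpr hV)
      (fun t => (t:ℝ) * ∑ u ∈ Finset.Icc t V, f u) = 1 := by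
    have : ∀ t ∈ Finset.Icc 1 V,
        (t:ℝ) * (∑ u ∈ Finset.Icc t V, f u) = 1 := by
      intro t ht
      rw [htail t ht]
      have ht1 : 1 ≤ t := (Finset.mem_Icc.mp ht).1
      field_simp
    rw [Finset.sup'_congr (Finset.nonempty_Icc.mpr hV) rfl this]
    simp
  exact ⟨hsum, hsup, by rw [hsum, hsup, div_one]⟩
end

section
/- Let the second-day valuation conditioned on first-day valuation 2^k be 2^{k+i} with probability 2^{-i} for i = 1,...,N (and 0 otherwise), where N = 2^n. Then the mechanism that charges a buyer with first-day valuation 2^k the full price 2^k on day one and allocates the second-day item for free with probability k/n is incentive compatible: the buyer's expected utility from reporting 2^l, namely (l/n)·E[v²|v¹=2^k] − 2^l = l·2^k − 2^l, is maximized over integers l at l ∈ {k, k+1}. -/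
lemma stmt4_aux (k l : ℕ) : l * 2^k + 2^k ≤ k * 2^k + 2^l := by
  rcases lt_trichotomy l k with h | h | h
  · have h1 : (l + 1) * 2^k ≤ k * 2^k := Nat.mul_le_mul_right _ h
    have h2 : 1 ≤ 2^l := Nat.one_le_two_pow
    nlinarith
  · subst h; omega
  · obtain ⟨m, hm⟩ := Nat.exists_eq_add_of_lt h
    subst hm
    have h1 : m + 1 + 1 ≤ 2^(m+1) := Nat.succ_le_of_lt Nat.lt_two_pow_self
    have : (m + 1 + 1) * 2^k ≤ 2^(m+1) * 2^k := Nat.mul_le_mul_right _ h1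
    rw [← pow_add] at this
    rw [show k + m + 1 = m + 1 + k from by omega]
    linarith

lemma stmt4_key (k l : ℕ) : (l:ℝ) * 2^k - 2^l ≤ (k:ℝ) * 2^k - 2^k := by
  have := stmt4_aux k l
  have : ((l * 2^k + 2^k : ℕ) : ℝ) ≤ ((k * 2^k + 2^l : ℕ) : ℝ) := by exact_mod_cast this
  push_cast at this
  linarith

/-- With the second-day valuation conditioned on first-day valuation
`2^k` being `2^{k+i}` with probability `2^{-i}` (so that the conditional
expectation is `n·2^k`), the mechanism charging full price `2^k` on day one and
giving the second item free with probability `k/n` is incentive compatible: the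
expected utility of reporting `2^l`, namely
`(l/n)·E[v²|v¹=2^k] − 2^l = l·2^k − 2^l`, is maximized over integers `l ≥ 1`
at `l ∈ {k, k+1}`. -/
theorem stmt4 (n k : ℕ) (hn : 1 ≤ n) (hk : 1 ≤ k) (hkn : k ≤ n) :
    (∀ l : ℕ, 1 ≤ l →
      ((l:ℝ)/n) * (∑ i ∈ Finset.Icc 1 n, ((2:ℝ)^i)⁻¹ * 2^(k+i)) - 2^l
        = (l:ℝ) * 2^k - 2^l) ∧
    (∀ l : ℕ, 1 ≤ l → (l:ℝ) * 2^k - 2^l ≤ (k:ℝ) * 2^k - 2^k) ∧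
    (∀ l : ℕ, 1 ≤ l → (l:ℝ) * 2^k - 2^l ≤ ((k:ℝ)+1) * 2^k - 2^(k+1)) := by
  have hn0 : (n:ℝ) ≠ 0 := by positivity
  refine ⟨?_, fun l _ => stmt4_key k l, ?_⟩
  · intro l _
    have hsum : (∑ i ∈ Finset.Icc 1 n, ((2:ℝ)^i)⁻¹ * 2^(k+i)) = n * 2^k := by
      have : ∀ i ∈ Finset.Icc 1 n, ((2:ℝ)^i)⁻¹ * 2^(k+i) = 2^k := by
        intro i _
        rw [pow_add]
        field_simp
      rw [Finset.sum_congr rfl this, Finset.sum_const, Nat.card_Icc]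
      simp
    rw [hsum]
    field_simp
  · intro l hl
    have := stmt4_key k l
    have h2 : (2:ℝ)^(k+1) = 2 * 2^k := by rw [pow_succ]; ring
    linarith
end
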